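/- arXiv:2207.12181 — 2 statements merged into one kernel-verified Lean document; each statement's English description precedes it below -/
import Mathlib

section
/- The 5-cycle C₅ is, up to isomorphism, the unique connected ladderful simple graph on 5 vertices. -/
/-- A vertex `v` is a rung if there are two adjacent vertices, both distinct from `v`,
neither of which is adjacent to `v`. -/
def IsRung {V : Type*} (G : SimpleGraph V) (v : V) : Prop :=
  ∃ w₁ w₂ : V, w₁ ≠ v ∧ w₂ ≠ v ∧ G.Adj w₁ w₂ ∧ ¬ G.Adj v w₁ ∧ ¬ G.Adj v w₂

/-- A graph is ladderful if every vertex is a rung. -/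
def Ladderful {V : Type*} (G : SimpleGraph V) : Prop :=
  ∀ v : V, IsRung G v

/-- The cycle graph on `ZMod n`: `x` and `y` are adjacent iff they differ by `1`. -/
def cycleG (n : ℕ) : SimpleGraph (ZMod n) :=
  SimpleGraph.fromRel (fun x y => x - y = 1)

/-! ### Auxiliary machinery -/

instance : DecidableRel (cycleG 5).Adj := fun a b =>
  decidable_of_iff (a ≠ b ∧ (a - b = 1 ∨ b - a = 1)) (by rw [cycleG, SimpleGraph.fromRel_adj])

/-- the 10 possible edges on 5 vertices -/
def edges : Fin 10 → Fin 5 × Fin 5 :=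
  ![(0,1),(0,2),(0,3),(0,4),(1,2),(1,3),(1,4),(2,3),(2,4),(3,4)]

def badj (b : Fin 10 → Bool) (i j : Fin 5) : Prop := ∃ k, b k = true ∧ edges k = (i, j)

def graphOf (b : Fin 10 → Bool) : SimpleGraph (Fin 5) := SimpleGraph.fromRel (badj b)

lemma edges_cover : ∀ i j : Fin 5, i ≠ j → ∃ k, edges k = (i, j) ∨ edges k = (j, i) := by
  decide

/-- Boolean neighbour function -/
def nborB (b : Fin 10 → Bool) (i j : Fin 5) : Bool :=
  (List.finRange 10).any fun k => b k && (edges k == (i, j) || edges k == (j, i))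

lemma nborB_iff (b : Fin 10 → Bool) (i j : Fin 5) :
    nborB b i j = true ↔ badj b i j ∨ badj b j i := by
  simp only [nborB, List.any_eq_true, List.mem_finRange, true_and, Bool.and_eq_true,
    Bool.or_eq_true, beq_iff_eq, badj]
  constructor
  · rintro ⟨k, hk, h | h⟩
    · exact Or.inl ⟨k, hk, h⟩
    · exact Or.inr ⟨k, hk, h⟩
  · rintro (⟨k, hk, h⟩ | ⟨k, hk, h⟩)
    · exact ⟨k, hk, Or.inl h⟩
    · exact ⟨k, hk, Or.inr h⟩

/-- Boolean adjacency for `graphOf b`. -/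
def adjB (b : Fin 10 → Bool) (i j : Fin 5) : Bool := !(i == j) && nborB b i j

lemma adjB_iff (b : Fin 10 → Bool) (i j : Fin 5) :
    adjB b i j = true ↔ (graphOf b).Adj i j := by
  rw [graphOf, SimpleGraph.fromRel_adj]
  simp [adjB, nborB_iff, Ne]

/-- one step of neighbourhood expansion -/
def step (b : Fin 10 → Bool) (s : Fin 5 → Bool) : Fin 5 → Bool :=
  fun v => s v || (List.finRange 5).any (fun u => s u && nborB b u v)

/-- Boolean connectivity test: everything reachable from `0` in at most 4 steps. -/
def connB (b : Fin 10 → Bool) : Bool :=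
  (List.finRange 5).all ((step b)^[4] (fun v => decide (v = 0)))

lemma step_mono (b : Fin 10 → Bool) (s : Fin 5 → Bool) (v : Fin 5) (h : s v = true) :
    step b s v = true := by simp [step, h]

lemma iter_mono (b : Fin 10 → Bool) : ∀ (n : ℕ) (s : Fin 5 → Bool) (v : Fin 5),
    s v = true → (step b)^[n] s v = true := by
  intro n
  induction n with
  | zero => intro s v h; simpa
  | succ n ih => intro s v h
                 rw [Function.iterate_succ_apply]
                 exact ih _ v (step_mono b s v h)

lemma adj_nborB {b : Fin 10 → Bool} {u v : Fin 5} (h : (graphOf b).Adj u v) :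
    nborB b u v = true := by
  rw [graphOf, SimpleGraph.fromRel_adj] at h
  exact (nborB_iff b u v).mpr h.2

lemma walk_reach (b : Fin 10 → Bool) : ∀ (n : ℕ) (s : Fin 5 → Bool) (u v : Fin 5)
    (p : (graphOf b).Walk u v), p.length ≤ n → s u = true → (step b)^[n] s v = true := by
  intro n
  induction n with
  | zero =>
    intro s u v p hl hs
    cases p with
    | nil => simpa
    | cons h q => simp [SimpleGraph.Walk.length_cons] at hl
  | succ n ih =>
    intro s u v p hl hs
    cases p with
    | nil => exact iter_mono b _ s u hs
    | @cons _ w _ h q =>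
      rw [Function.iterate_succ_apply]
      refine ih (step b s) w v q ?_ ?_
      · simpa [SimpleGraph.Walk.length_cons] using hl
      · have hn : nborB b u w = true := adj_nborB h
        simp only [step, Bool.or_eq_true, List.any_eq_true, Bool.and_eq_true]
        exact Or.inr ⟨u, List.mem_finRange u, hs, hn⟩

lemma conn_connB {b : Fin 10 → Bool} (h : (graphOf b).Connected) : connB b = true := by
  rw [connB, List.all_eq_true]
  intro v _
  obtain ⟨p⟩ := h.preconnected 0 v
  have hp := p.toPath.2.length_lt
  simp only [Fintype.card_fin] at hp
  exact walk_reach b 4 _ 0 v p.toPath (by omega) (by simp)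

/-- Boolean ladderful test. -/
def ladderB (b : Fin 10 → Bool) : Bool :=
  (List.finRange 5).all fun v => (List.finRange 5).any fun w₁ => (List.finRange 5).any fun w₂ =>
    !(w₁ == v) && !(w₂ == v) && adjB b w₁ w₂ && !(adjB b v w₁) && !(adjB b v w₂)

lemma ladderB_of_ladderful {b : Fin 10 → Bool} (h : Ladderful (graphOf b)) :
    ladderB b = true := by
  rw [ladderB, List.all_eq_true]
  intro v _
  obtain ⟨w₁, w₂, h1, h2, h3, h4, h5⟩ := h v
  simp only [List.any_eq_true, List.mem_finRange, true_and]
  refine ⟨w₁, w₂, ?_⟩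
  simp only [Bool.and_eq_true, Bool.not_eq_true', beq_eq_false_iff_ne, Bool.not_eq_true]
  refine ⟨⟨⟨⟨h1, h2⟩, (adjB_iff b w₁ w₂).mpr h3⟩, ?_⟩, ?_⟩
  · rw [← Bool.not_eq_true]; intro hc; exact h4 ((adjB_iff b v w₁).mp hc)
  · rw [← Bool.not_eq_true]; intro hc; exact h5 ((adjB_iff b v w₂).mp hc)

/-- Boolean adjacency of the 5-cycle on `Fin 5`. -/
def cycB (i j : Fin 5) : Bool :=
  (i.val + 1 == j.val) || (j.val + 1 == i.val) || (i.val == 0 && j.val == 4) ||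
    (j.val == 0 && i.val == 4)

def e5 : Fin 5 ≃ ZMod 5 := Equiv.refl _

lemma cycB_iff : ∀ i j : Fin 5, cycB i j = true ↔ (cycleG 5).Adj (e5 i) (e5 j) := by
  decide

/-- injectivity test for `f : Fin 5 → Fin 5` -/
def injB (f : Fin 5 → Fin 5) : Bool :=
  (List.finRange 5).all fun i => (List.finRange 5).all fun j => (f i == f j) == (i == j)

lemma injB_inj {f : Fin 5 → Fin 5} (h : injB f = true) : Function.Injective f := by
  intro i j hij
  rw [injB, List.all_eq_true] at h
  have := h i (List.mem_finRange i)
  rw [List.all_eq_true] at this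
  have := this j (List.mem_finRange j)
  have h2 : ((f i == f j) = (i == j)) := beq_iff_eq.mp this
  have h3 : (f i == f j) = true := beq_iff_eq.mpr hij
  rw [h3] at h2
  exact beq_iff_eq.mp h2.symm

/-- all 3125 functions `Fin 5 → Fin 5` -/
def allFuns : List (Fin 5 → Fin 5) :=
  (List.finRange 5).flatMap fun a => (List.finRange 5).flatMap fun b =>
    (List.finRange 5).flatMap fun c => (List.finRange 5).flatMap fun d =>
      (List.finRange 5).map fun e => ![a, b, c, d, e]

/-- test whether `graphOf b` is isomorphic to the 5-cycle -/
def permB (b : Fin 10 → Bool) : Bool :=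
  allFuns.any fun f => injB f &&
    ((List.finRange 5).all fun i => (List.finRange 5).all fun j =>
      adjB b i j == cycB (f i) (f j))

/-- all 1024 edge-bit vectors -/
def allBits : List (Fin 10 → Bool) :=
  ([false, true]).flatMap fun a₀ => ([false, true]).flatMap fun a₁ =>
    ([false, true]).flatMap fun a₂ => ([false, true]).flatMap fun a₃ =>
      ([false, true]).flatMap fun a₄ => ([false, true]).flatMap fun a₅ =>
        ([false, true]).flatMap fun a₆ => ([false, true]).flatMap fun a₇ =>
          ([false, true]).flatMap fun a₈ => ([false, true]).map fun a₉ =>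
            ![a₀, a₁, a₂, a₃, a₄, a₅, a₆, a₇, a₈, a₉]

lemma mem_allBits (b : Fin 10 → Bool) : b ∈ allBits := by
  have hb : b = ![b 0, b 1, b 2, b 3, b 4, b 5, b 6, b 7, b 8, b 9] := by
    funext i; fin_cases i <;> rfl
  rw [allBits]
  simp only [List.mem_flatMap, List.mem_map]
  exact ⟨b 0, by cases (b 0) <;> simp, b 1, by cases (b 1) <;> simp,
    b 2, by cases (b 2) <;> simp, b 3, by cases (b 3) <;> simp,
    b 4, by cases (b 4) <;> simp, b 5, by cases (b 5) <;> simp,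
    b 6, by cases (b 6) <;> simp, b 7, by cases (b 7) <;> simp,
    b 8, by cases (b 8) <;> simp, b 9, by cases (b 9) <;> simp, hb.symm⟩

set_option maxRecDepth 100000 in
set_option maxHeartbeats 3000000 in
lemma check_true : allBits.all (fun b => !(connB b && ladderB b) || permB b) = true := by
  decide

/-- Key finite lemma. -/
lemma key (b : Fin 10 → Bool) (hc : (graphOf b).Connected) (hl : Ladderful (graphOf b)) :
    ∃ e : Fin 5 ≃ ZMod 5, ∀ i j, (graphOf b).Adj i j ↔ (cycleG 5).Adj (e i) (e j) := by
  have h := (List.all_eq_true.mp check_true) b (mem_allBits b)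
  rw [Bool.or_eq_true] at h
  have hperm : permB b = true := by
    rcases h with h | h
    · exfalso
      rw [conn_connB hc, ladderB_of_ladderful hl] at h
      simp at h
    · exact h
  rw [permB, List.any_eq_true] at hperm
  obtain ⟨f, _, hf⟩ := hperm
  rw [Bool.and_eq_true] at hf
  have hinj : Function.Injective f := injB_inj hf.1
  have hbij : Function.Bijective f := (Finite.injective_iff_bijective).mp hinj
  have hmatch : ∀ i j : Fin 5, adjB b i j = cycB (f i) (f j) := by
    intro i j
    have h1 := (List.all_eq_true.mp hf.2) i (List.mem_finRange i)
    have h2 := (List.all_eq_true.mp h1) j (List.mem_finRange j)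
    exact beq_iff_eq.mp h2
  refine ⟨(Equiv.ofBijective f hbij).trans e5, fun i j => ?_⟩
  rw [← adjB_iff, hmatch i j, cycB_iff]
  rfl

lemma ladderful_cycle : Ladderful (cycleG 5) := by
  intro v
  unfold IsRung
  exact ⟨v + 2, v + 3, by revert v; decide, by revert v; decide, by revert v; decide,
    by revert v; decide, by revert v; decide⟩

lemma connected_cycle : (cycleG 5).Connected := by
  have ha : ∀ i : ZMod 5, (cycleG 5).Adj i (i + 1) := by decide
  rw [SimpleGraph.connected_iff]
  refine ⟨fun u v => ?_, ⟨0⟩⟩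
  have h0 : ∀ v : ZMod 5, (cycleG 5).Reachable 0 v := by
    intro v
    fin_cases v
    · rfl
    · exact (ha 0).reachable
    · exact ((ha 0).reachable).trans (ha 1).reachable
    · exact (((ha 0).reachable).trans (ha 1).reachable).trans (ha 2).reachable
    · exact ((((ha 0).reachable).trans (ha 1).reachable).trans (ha 2).reachable).trans
        (ha 3).reachable
  exact (h0 u).symm.trans (h0 v)

/-- `C₅` is, up to isomorphism, the unique connected ladderful graph on
5 vertices. -/
theorem stmt_6 :
    (cycleG 5).Connected ∧ Ladderful (cycleG 5) ∧
      ∀ (V : Type) [Fintype V], Fintype.card V = 5 →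
        ∀ G : SimpleGraph V, G.Connected → Ladderful G → Nonempty (G ≃g cycleG 5) := by
  refine ⟨connected_cycle, ladderful_cycle, ?_⟩
  intro V _ hV G hconn hlad
  classical
  let e0 : V ≃ Fin 5 := Fintype.equivFinOfCardEq hV
  let b : Fin 10 → Bool := fun k => decide (G.Adj (e0.symm (edges k).1) (e0.symm (edges k).2))
  have hAdj : ∀ i j : Fin 5, (graphOf b).Adj i j ↔ G.Adj (e0.symm i) (e0.symm j) := by
    intro i j
    rw [graphOf, SimpleGraph.fromRel_adj]
    constructor
    · rintro ⟨hne, h | h⟩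
      · obtain ⟨k, hk, hk2⟩ := h
        have := of_decide_eq_true hk
        rw [hk2] at this
        exact this
      · obtain ⟨k, hk, hk2⟩ := h
        have := of_decide_eq_true hk
        rw [hk2] at this
        exact this.symm
    · intro h
      have hne : i ≠ j := fun hc => G.ne_of_adj h (by rw [hc])
      obtain ⟨k, hk | hk⟩ := edges_cover i j hne
      · exact ⟨hne, Or.inl ⟨k, decide_eq_true (by rw [hk]; exact h), hk⟩⟩
      · exact ⟨hne, Or.inr ⟨k, decide_eq_true (by rw [hk]; exact h.symm), hk⟩⟩
  have iso1 : G ≃g graphOf b :=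
    ⟨e0, by intro a c; rw [hAdj]; simp⟩
  have hc' : (graphOf b).Connected := by
    rw [← SimpleGraph.Iso.connected_iff iso1]; exact hconn
  have hl' : Ladderful (graphOf b) := by
    intro v
    obtain ⟨w₁, w₂, h1, h2, h3, h4, h5⟩ := hlad (iso1.symm v)
    refine ⟨iso1 w₁, iso1 w₂, ?_, ?_, ?_, ?_, ?_⟩
    · intro hc; apply h1; have := congrArg iso1.symm hc; simpa using this
    · intro hc; apply h2; have := congrArg iso1.symm hc; simpa using this
    · exact iso1.map_adj_iff.mpr h3
    · intro hc
      apply h4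
      have := iso1.symm.map_adj_iff.mpr hc
      simpa using this
    · intro hc
      apply h5
      have := iso1.symm.map_adj_iff.mpr hc
      simpa using this
  obtain ⟨e, he⟩ := key b hc' hl'
  exact ⟨iso1.trans ⟨e, fun {a c} => (he a c).symm⟩⟩
end

section
/- Let X be a set equipped with the topology of pointwise convergence on functions X → X (where X is discrete), and let G ≤ Sym(X) be a group of permutations of X. If for some point x ∈ X whose G-orbit is all of X the stabilizer G_x is closed in Sym(X), and more generally if all point stabilizers G_x (x ∈ X) are closed in Sym(X), then G is closed in Sym(X). -/
/-- in the permutation topology on `Sym(X)` (induced by pointwise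
convergence of `g` and `g⁻¹`, with `X` discrete), a permutation group all of whose point
stabilizers are closed is itself closed. -/
theorem stmt_17 {X : Type*} (G : Subgroup (Equiv.Perm X)) :
    letI : TopologicalSpace X := ⊥
    letI : TopologicalSpace (Equiv.Perm X) :=
      TopologicalSpace.induced
        (fun g : Equiv.Perm X => ((g : X → X), (g.symm : X → X))) inferInstance
    (∀ x : X, IsClosed {g : Equiv.Perm X | g ∈ G ∧ g x = x}) →
      IsClosed (G : Set (Equiv.Perm X)) := by
  intro hstab
  letI instX : TopologicalSpace X := ⊥
  letI instP : TopologicalSpace (Equiv.Perm X) :=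
    TopologicalSpace.induced
      (fun g : Equiv.Perm X => ((g : X → X), (g.symm : X → X))) inferInstance
  haveI : DiscreteTopology X := ⟨rfl⟩
  have hφ : Continuous (fun g : Equiv.Perm X => ((g : X → X), (g.symm : X → X))) :=
    continuous_induced_dom
  have h1 : Continuous fun f : Equiv.Perm X => (f : X → X) := continuous_fst.comp hφ
  have h2 : Continuous fun f : Equiv.Perm X => (f.symm : X → X) := continuous_snd.comp hφ
  have hev : ∀ x : X, Continuous fun f : Equiv.Perm X => f x := fun x =>
    (continuous_apply x).comp h1
  have hev' : ∀ x : X, Continuous fun f : Equiv.Perm X => f.symm x := fun x =>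
    (continuous_apply x).comp h2
  have hmul : ∀ h : Equiv.Perm X, Continuous fun f : Equiv.Perm X => h * f := by
    intro h
    apply continuous_induced_rng.mpr
    refine Continuous.prodMk ?_ ?_
    · exact continuous_pi fun x => continuous_of_discreteTopology.comp (hev x)
    · exact continuous_pi fun x => hev' (h.symm x)
  refine isClosed_of_closure_subset fun g hg => ?_
  by_cases hX : Nonempty X
  · obtain ⟨x⟩ := hX
    have hU : IsOpen {f : Equiv.Perm X | f x = g x} :=
      (hev x).isOpen_preimage {g x} (isOpen_discrete _)
    obtain ⟨h, hhU, hhG⟩ := mem_closure_iff.mp hg _ hU rfl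
    have hk : h⁻¹ * g ∈ {f : Equiv.Perm X | f ∈ G ∧ f x = x} := by
      rw [← (hstab x).closure_eq]
      rw [mem_closure_iff]
      intro W hW hkW
      have hW2 : IsOpen ((fun f => h⁻¹ * f) ⁻¹' W ∩ {f | f x = g x}) :=
        (((hmul h⁻¹).isOpen_preimage W hW)).inter hU
      obtain ⟨h', ⟨h'W, h'x⟩, h'G⟩ := mem_closure_iff.mp hg _ hW2 ⟨hkW, rfl⟩
      refine ⟨h⁻¹ * h', h'W, G.mul_mem (G.inv_mem hhG) h'G, ?_⟩
      show h⁻¹ (h' x) = x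
      rw [h'x, ← hhU]
      exact h.symm_apply_apply x
    have := G.mul_mem hhG hk.1
    simpa using this
  · haveI := not_nonempty_iff.mp hX
    have : g = 1 := Equiv.ext fun y => (IsEmpty.elim ‹IsEmpty X› y)
    rw [this]
    exact G.one_mem
end
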